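/- For the rank-2 reduced negative definite form Q = [[a,b],[b,c]] (0 ≥ 2b ≥ a ≥ c), two characteristic points (x,y), (x',y') ∈ ℤ² correspond to the same class in ℤ²/2Qℤ² + (translation structure) if and only if (x'−x, y'−y) = 2m(a,b) + 2n(b,c) for some integers m, n; and the parallelogram with vertices ±(a+b, b+c), ±(a−b, b−c) contains exactly one representative of each class among its interior characteristic points together with those in one boundary component minus ±(a−b,b−c). -/

import Mathlib

open Matrix

private lemma index_range_mulVecLin (M : Matrix (Fin 2) (Fin 2) ℤ)
    (hM : Function.Injective M.mulVecLin) :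
    (LinearMap.range M.mulVecLin).toAddSubgroup.index = M.det.natAbs := by
  classical
  set N := LinearMap.range M.mulVecLin with hN
  obtain ⟨n, snf⟩ := N.smithNormalForm (Pi.basisFun ℤ (Fin 2))
  let eqv : (Fin 2 → ℤ) ≃ₗ[ℤ] N := LinearEquiv.ofInjective M.mulVecLin hM
  have hn : n = 2 := by
    have := card_eq_of_linearEquiv ℤ ((snf.bN.equivFun).symm.trans (eqv.symm))
    simpa using this
  subst hn
  have hidx : N.toAddSubgroup.index = (snf.a 0).natAbs * (snf.a 1).natAbs := by
    rw [snf.toAddSubgroup_index_eq_pow_mul_prod]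
    simp [Fin.prod_univ_two]
  rw [hidx]
  -- the basis of N coming from the columns of M
  let b1 : Module.Basis (Fin 2) ℤ N := (Pi.basisFun ℤ (Fin 2)).map eqv
  have hb1 : ∀ k i, ((b1 k : Fin 2 → ℤ)) i = M i k := by
    intro k i
    show (eqv ((Pi.basisFun ℤ (Fin 2)) k) : Fin 2 → ℤ) i = M i k
    rw [LinearEquiv.ofInjective_apply]
    simp [Matrix.mulVecLin_apply, Matrix.mulVec_single]
  -- change of basis matrix
  let C : Matrix (Fin 2) (Fin 2) ℤ := b1.toMatrix ⇑snf.bN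
  have hCdet : IsUnit C.det := by
    have h := Module.Basis.toMatrix_mul_toMatrix_flip b1 snf.bN
    have := congrArg Matrix.det h
    rw [Matrix.det_mul, Matrix.det_one] at this
    exact IsUnit.of_mul_eq_one _ this
  -- the matrix with columns the bN vectors
  let W : Matrix (Fin 2) (Fin 2) ℤ := Matrix.of fun i j => (snf.bN j : Fin 2 → ℤ) i
  have hW : W = M * C := by
    ext i j
    have hsum : (∑ k, C k j • b1 k) = snf.bN j := Module.Basis.sum_toMatrix_smul_self b1 _ j
    calc W i j = (snf.bN j : Fin 2 → ℤ) i := rfl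
      _ = ∑ k, C k j * M i k := by
          rw [← hsum]
          rw [show ((↑(∑ k, C k j • b1 k) : Fin 2 → ℤ)) = ∑ k, C k j • (b1 k : Fin 2 → ℤ) by
            push_cast; rfl]
          simp [hb1]
      _ = (M * C) i j := by
          rw [Matrix.mul_apply]
          exact Finset.sum_congr rfl fun k _ => mul_comm _ _
  have hW2 : ∀ i j, W i j = snf.a j * (snf.bM (snf.f j)) i := by
    intro i j
    have := congrArg (fun x : Fin 2 → ℤ => x i) (snf.snf j)
    simpa [W] using this
  -- det of the bM matrix is a unit
  let P : Matrix (Fin 2) (Fin 2) ℤ := (Pi.basisFun ℤ (Fin 2)).toMatrix ⇑snf.bM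
  have hP : ∀ i j, P i j = snf.bM j i := by
    intro i j; simp [P, Module.Basis.toMatrix_apply]
  have hPdet : IsUnit P.det := by
    have h := Module.Basis.toMatrix_mul_toMatrix_flip (Pi.basisFun ℤ (Fin 2)) snf.bM
    have := congrArg Matrix.det h
    rw [Matrix.det_mul, Matrix.det_one] at this
    exact IsUnit.of_mul_eq_one _ this
  have hPone : P.det.natAbs = 1 := Int.isUnit_iff.mp hPdet |>.elim
    (fun h => by simp [h]) (fun h => by simp [h])
  have hCone : C.det.natAbs = 1 := Int.isUnit_iff.mp hCdet |>.elim
    (fun h => by simp [h]) (fun h => by simp [h])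
  have hdetW : W.det = M.det * C.det := by rw [hW, Matrix.det_mul]
  have hPdetval : P.det = P 0 0 * P 1 1 - P 0 1 * P 1 0 := Matrix.det_fin_two P
  have hWdetval : W.det = W 0 0 * W 1 1 - W 0 1 * W 1 0 := Matrix.det_fin_two W
  have hf01 : snf.f 1 ≠ snf.f 0 := fun h => by simpa using snf.f.injective h
  have hd : W.det.natAbs = (snf.a 0).natAbs * (snf.a 1).natAbs := by
    rw [hWdetval, hW2, hW2, hW2, hW2]
    have h0 : snf.f 0 = 0 ∨ snf.f 0 = 1 := by omega
    rcases h0 with h0 | h0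
    · have h1 : snf.f 1 = 1 := by omega
      rw [h0, h1]
      have : snf.a 0 * snf.bM 0 0 * (snf.a 1 * snf.bM 1 1) -
          snf.a 1 * snf.bM 1 0 * (snf.a 0 * snf.bM 0 1)
          = (snf.a 0 * snf.a 1) * P.det := by rw [hPdetval, hP, hP, hP, hP]; ring
      rw [this, Int.natAbs_mul, hPone, mul_one, Int.natAbs_mul]
    · have h1 : snf.f 1 = 0 := by omega
      rw [h0, h1]
      have : snf.a 0 * snf.bM 1 0 * (snf.a 1 * snf.bM 0 1) -
          snf.a 1 * snf.bM 0 0 * (snf.a 0 * snf.bM 1 1)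
          = (snf.a 0 * snf.a 1) * (-P.det) := by rw [hPdetval, hP, hP, hP, hP]; ring
      rw [this, Int.natAbs_mul, Int.natAbs_neg, hPone, mul_one, Int.natAbs_mul]
  have : M.det.natAbs = W.det.natAbs := by
    rw [hdetW, Int.natAbs_mul, hCone, mul_one]
  rw [this, hd]

/-- For the reduced negative definite form `Q = [[a,b],[b,c]]`,
two characteristic points are in the same class modulo `2Qℤ²` iff they differ
by `2m(a,b) + 2n(b,c)`, and the number of characteristic classes modulo
`2Qℤ²` equals `det Q = ac − b²`. -/
theorem stmt_14 (a b c : ℤ) (h1 : 0 ≥ 2 * b) (h2 : 2 * b ≥ a) (h3 : a ≥ c)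
    (hneg : ∀ x : Fin 2 → ℤ, x ≠ 0 → x ⬝ᵥ (!![a, b; b, c]).mulVec x < 0) :
    (∀ v w : Fin 2 → ℤ,
      (v 0 ≡ a [ZMOD 2] ∧ v 1 ≡ c [ZMOD 2]) →
      (w 0 ≡ a [ZMOD 2] ∧ w 1 ≡ c [ZMOD 2]) →
      ((QuotientAddGroup.mk
          (s := (LinearMap.range
            ((2 • (!![a, b; b, c] : Matrix (Fin 2) (Fin 2) ℤ)).mulVecLin)).toAddSubgroup) v
        = QuotientAddGroup.mk w) ↔
        ∃ m n : ℤ, w 0 - v 0 = 2 * (m * a + n * b) ∧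
          w 1 - v 1 = 2 * (m * b + n * c))) ∧
    Set.ncard ((QuotientAddGroup.mk
        (s := (LinearMap.range
          ((2 • (!![a, b; b, c] : Matrix (Fin 2) (Fin 2) ℤ)).mulVecLin)).toAddSubgroup))
        '' {v : Fin 2 → ℤ | v 0 ≡ a [ZMOD 2] ∧ v 1 ≡ c [ZMOD 2]})
      = (a * c - b ^ 2).toNat := by
  classical
  set Q : Matrix (Fin 2) (Fin 2) ℤ := !![a, b; b, c] with hQdef
  set H : AddSubgroup (Fin 2 → ℤ) :=
    (LinearMap.range ((2 • Q).mulVecLin)).toAddSubgroup with hHdef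
  -- membership in H, concretely
  have hmemH : ∀ z : Fin 2 → ℤ, z ∈ H ↔
      ∃ m n : ℤ, z 0 = 2 * (m * a + n * b) ∧ z 1 = 2 * (m * b + n * c) := by
    intro z
    constructor
    · rintro ⟨y, rfl⟩
      refine ⟨y 0, y 1, ?_, ?_⟩ <;>
        simp [Matrix.mulVecLin_apply, Matrix.mulVec, dotProduct,
          Fin.sum_univ_two, hQdef] <;> ring
    · rintro ⟨m, n, hz0, hz1⟩
      refine ⟨![m, n], ?_⟩
      funext i
      fin_cases i <;>
        simp [Matrix.mulVecLin_apply, Matrix.mulVec, dotProduct,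
          Fin.sum_univ_two, hQdef, hz0, hz1] <;> ring
  constructor
  · intro v w _ _
    rw [QuotientAddGroup.eq]
    constructor
    · intro h
      obtain ⟨m, n, hm, hn⟩ := (hmemH _).mp h
      simp only [Pi.add_apply, Pi.neg_apply] at hm hn
      exact ⟨m, n, by linarith, by linarith⟩
    · rintro ⟨m, n, hm, hn⟩
      refine (hmemH _).mpr ⟨m, n, ?_, ?_⟩ <;>
        simp only [Pi.add_apply, Pi.neg_apply] <;> linarith
  -- counting
  · have hc : c < 0 := by
      have := hneg ![0, 1] (by
        intro h
        have := congrFun h 1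
        simp at this)
      simpa [Matrix.mulVec, dotProduct, Fin.sum_univ_two, hQdef] using this
    have hdetpos : 0 < a * c - b ^ 2 := by
      have := hneg ![c, -b] (by
        intro h
        have := congrFun h 0
        simp at this
        omega)
      have hval : (![c, -b] : Fin 2 → ℤ) ⬝ᵥ Q *ᵥ ![c, -b] = c * (a * c - b ^ 2) := by
        simp [Matrix.mulVec, dotProduct, Fin.sum_univ_two, hQdef]; ring
      rw [hval] at this
      nlinarith
    have hQinj : Function.Injective Q.mulVecLin := by
      rw [injective_iff_map_eq_zero]
      intro x hx
      by_contra hx0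
      have h := hneg x hx0
      have hx' : Q *ᵥ x = 0 := hx
      rw [hx'] at h
      simp at h
    set N : Submodule ℤ (Fin 2 → ℤ) := LinearMap.range Q.mulVecLin with hNdef
    have hmemN : ∀ z : Fin 2 → ℤ, z ∈ N ↔
        ∃ m n : ℤ, z 0 = m * a + n * b ∧ z 1 = m * b + n * c := by
      intro z
      constructor
      · rintro ⟨y, rfl⟩
        refine ⟨y 0, y 1, ?_, ?_⟩ <;>
          simp [Matrix.mulVecLin_apply, Matrix.mulVec, dotProduct,
            Fin.sum_univ_two, hQdef] <;> ring
      · rintro ⟨m, n, hz0, hz1⟩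
        refine ⟨![m, n], ?_⟩
        funext i
        fin_cases i <;>
          simp [Matrix.mulVecLin_apply, Matrix.mulVec, dotProduct,
            Fin.sum_univ_two, hQdef, hz0, hz1] <;> ring
    set v₀ : Fin 2 → ℤ := ![a, c] with hv₀def
    set f : (Fin 2 → ℤ) → ((Fin 2 → ℤ) ⧸ H) :=
      fun x => QuotientAddGroup.mk ((2 : ℤ) • x + v₀) with hfdef
    have hfeq : ∀ x y : Fin 2 → ℤ, f x = f y ↔ y - x ∈ N := by
      intro x y
      rw [hfdef]
      simp only
      rw [QuotientAddGroup.eq, hmemH, hmemN]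
      constructor
      · rintro ⟨m, n, hm, hn⟩
        refine ⟨m, n, ?_, ?_⟩ <;>
          simp only [Pi.add_apply, Pi.neg_apply, Pi.smul_apply, smul_eq_mul,
            Pi.sub_apply] at hm hn ⊢ <;> linarith
      · rintro ⟨m, n, hm, hn⟩
        refine ⟨m, n, ?_, ?_⟩ <;>
          simp only [Pi.add_apply, Pi.neg_apply, Pi.smul_apply, smul_eq_mul,
            Pi.sub_apply] at hm hn ⊢ <;> linarith
    let F : ((Fin 2 → ℤ) ⧸ N.toAddSubgroup) → ((Fin 2 → ℤ) ⧸ H) :=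
      fun q => Quotient.liftOn' q f (by
        intro x y hxy
        rw [QuotientAddGroup.leftRel_apply, Submodule.mem_toAddSubgroup] at hxy
        rw [hfeq]
        have : -x + y = y - x := by abel
        rwa [this] at hxy)
    have hFmk : ∀ x : Fin 2 → ℤ, F (QuotientAddGroup.mk x) = f x := fun _ => rfl
    have hFinj : Function.Injective F := by
      intro q1 q2
      induction q1 using QuotientAddGroup.induction_on with
      | H x =>
        induction q2 using QuotientAddGroup.induction_on with
        | H y =>
          intro h
          rw [hFmk, hFmk, hfeq] at h
          rw [QuotientAddGroup.eq]
          rw [Submodule.mem_toAddSubgroup]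
          have : -x + y = y - x := by abel
          rwa [this]
    have hrange : Set.range F =
        (QuotientAddGroup.mk (s := H)) '' {v : Fin 2 → ℤ | v 0 ≡ a [ZMOD 2] ∧ v 1 ≡ c [ZMOD 2]} := by
      ext q
      constructor
      · rintro ⟨q', rfl⟩
        induction q' using QuotientAddGroup.induction_on with
        | H x =>
          refine ⟨(2 : ℤ) • x + v₀, ⟨?_, ?_⟩, (hFmk x).symm⟩
          · show ((2 : ℤ) • x + v₀) 0 ≡ a [ZMOD 2]
            rw [Int.modEq_iff_dvd]
            refine ⟨-(x 0), ?_⟩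
            simp [hv₀def]
          · show ((2 : ℤ) • x + v₀) 1 ≡ c [ZMOD 2]
            rw [Int.modEq_iff_dvd]
            refine ⟨-(x 1), ?_⟩
            simp [hv₀def]
      · rintro ⟨v, ⟨hv0, hv1⟩, rfl⟩
        obtain ⟨k, hk⟩ := (Int.modEq_iff_dvd.mp hv0)
        obtain ⟨l, hl⟩ := (Int.modEq_iff_dvd.mp hv1)
        refine ⟨QuotientAddGroup.mk ![-k, -l], ?_⟩
        rw [hFmk]
        rw [hfdef]
        simp only
        congr 1
        funext i
        fin_cases i <;>
          simp [hv₀def] <;> linarith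
    have key : Set.ncard ((QuotientAddGroup.mk (s := H))
        '' {v : Fin 2 → ℤ | v 0 ≡ a [ZMOD 2] ∧ v 1 ≡ c [ZMOD 2]}) = Q.det.natAbs := by
      rw [← hrange, ← Nat.card_coe_set_eq, Nat.card_range_of_injective hFinj]
      exact index_range_mulVecLin Q hQinj
    rw [key]
    have e : Q.det = a * c - b ^ 2 := by rw [hQdef, Matrix.det_fin_two_of]; ring
    rw [e]
    have h1 := Int.natAbs_of_nonneg hdetpos.le
    have h2 := Int.toNat_of_nonneg hdetpos.le
    exact Int.natCast_inj.mp (h1.trans h2.symm)
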